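/- Every linear map F: ℝ^{n×r} × ℝ^{m×r} → ℝ^{n'×r} × ℝ^{m'×r} that is equivariant with respect to the GL(r) action R ⋆ (U,V) = (UR, VR^{-T}) is of the form F(U,V) = (ΦU, ΨV) for some matrices Φ ∈ ℝ^{n'×n} and Ψ ∈ ℝ^{m'×m}. -/

import Mathlib

open Matrix

private lemma unit_one_add_std {r : ℕ} (j k : Fin r) :
    IsUnit ((1 : Matrix (Fin r) (Fin r) ℝ) + single j k (1:ℝ)) := by
  by_cases h : j = k
  · subst h
    refine (Matrix.isUnit_iff_isUnit_det _).mpr (Matrix.isUnit_det_of_right_inverse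
      (B := 1 - (2:ℝ)⁻¹ • single j j (1:ℝ)) ?_)
    have hE : single j j (1:ℝ) * single j j (1:ℝ) = single j j (1:ℝ) := by
      simpa using Matrix.single_mul_single_same (c := (1:ℝ)) j j j (1:ℝ)
    rw [mul_sub, Matrix.mul_one, Matrix.mul_smul, add_mul, one_mul, hE]
    module
  · refine (Matrix.isUnit_iff_isUnit_det _).mpr (Matrix.isUnit_det_of_right_inverse (B := 1 - single j k (1:ℝ)) ?_)
    have hE : single j k (1:ℝ) * single j k (1:ℝ) = 0 := by
      apply Matrix.single_mul_single_of_ne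
      exact Ne.symm h
    rw [mul_sub, Matrix.mul_one, add_mul, one_mul, hE, add_zero]
    abel

private lemma rep_lemma {n n' r : ℕ}
    (A : Matrix (Fin n) (Fin r) ℝ →ₗ[ℝ] Matrix (Fin n') (Fin r) ℝ)
    (hA : ∀ (U : Matrix (Fin n) (Fin r) ℝ) (R : Matrix (Fin r) (Fin r) ℝ), IsUnit R →
      A (U * R) = A U * R) :
    ∃ Φ : Matrix (Fin n') (Fin n) ℝ, ∀ U, A U = Φ * U := by
  rcases Nat.eq_zero_or_pos r with hr | hr
  · subst hr
    exact ⟨0, fun U => Subsingleton.elim _ _⟩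
  have hstd : ∀ (U : Matrix (Fin n) (Fin r) ℝ) (j k : Fin r),
      A (U * single j k (1:ℝ)) = A U * single j k (1:ℝ) := by
    intro U j k
    have h1 := hA U _ (unit_one_add_std j k)
    rw [Matrix.mul_add, Matrix.mul_add, Matrix.mul_one, Matrix.mul_one, map_add] at h1
    exact add_left_cancel h1
  have hall : ∀ (U : Matrix (Fin n) (Fin r) ℝ) (M : Matrix (Fin r) (Fin r) ℝ),
      A (U * M) = A U * M := by
    intro U M
    have hM := Matrix.matrix_eq_sum_single M
    calc A (U * M) = A (U * ∑ i, ∑ j, single i j (M i j)) := by rw [← hM]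
      _ = ∑ i, ∑ j, A (U * single i j (M i j)) := by
          rw [Matrix.mul_sum]
          simp only [Matrix.mul_sum, map_sum]
      _ = ∑ i, ∑ j, A U * single i j (M i j) := by
          refine Finset.sum_congr rfl fun i _ => Finset.sum_congr rfl fun j _ => ?_
          have hs : single i j (M i j) = (M i j) • single i j (1:ℝ) := by
            rw [Matrix.smul_single, smul_eq_mul, mul_one]
          rw [hs, Matrix.mul_smul, LinearMap.map_smul, hstd, Matrix.mul_smul]
      _ = A U * M := by
          simp only [← Matrix.mul_sum]
          rw [← hM]
  set z : Fin r := ⟨0, hr⟩ with hz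
  refine ⟨Matrix.of fun i p => A (single p z (1:ℝ)) i z, fun U => ?_⟩
  induction U using Matrix.induction_on' with
  | h_zero => simp
  | h_add P Q hP hQ => rw [map_add, hP, hQ, Matrix.mul_add]
  | h_std_basis p q x =>
    have hfac : single p q x = single p z x * single z q (1:ℝ) := by
      ext a b
      simp only [Matrix.mul_apply, Matrix.single, Matrix.of_apply, ite_and, mul_ite,
        mul_one, mul_zero, ite_mul, zero_mul]
      by_cases h1 : p = a <;> by_cases h2 : q = b <;> simp [h1, h2]
    have hx : single p z x = x • single p z (1:ℝ) := by
      rw [Matrix.smul_single, smul_eq_mul, mul_one]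
    conv_lhs => rw [hfac]
    rw [hall, hx, LinearMap.map_smul]
    ext i b
    simp only [Matrix.mul_apply, Matrix.single, Matrix.of_apply, ite_and,
      Matrix.smul_apply, smul_eq_mul, mul_ite, mul_one, mul_zero]
    by_cases h2 : q = b <;> simp [h2, mul_comm]

/-- Every linear map `F : ℝ^{n×r} × ℝ^{m×r} → ℝ^{n'×r} × ℝ^{m'×r}` equivariant with
respect to the GL(r) action `R ⋆ (U,V) = (UR, VR^{-T})` has the form
`F(U,V) = (ΦU, ΨV)` for some matrices `Φ`, `Ψ`. -/
theorem stmt_7 {n m n' m' r : ℕ}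
    (F : (Matrix (Fin n) (Fin r) ℝ × Matrix (Fin m) (Fin r) ℝ) →ₗ[ℝ]
         (Matrix (Fin n') (Fin r) ℝ × Matrix (Fin m') (Fin r) ℝ))
    (hF : ∀ R : Matrix (Fin r) (Fin r) ℝ, IsUnit R →
      ∀ (U : Matrix (Fin n) (Fin r) ℝ) (V : Matrix (Fin m) (Fin r) ℝ),
        F (U * R, V * (R⁻¹)ᵀ) = ((F (U, V)).1 * R, (F (U, V)).2 * (R⁻¹)ᵀ)) :
    ∃ (Φ : Matrix (Fin n') (Fin n) ℝ) (Ψ : Matrix (Fin m') (Fin m) ℝ),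
      ∀ (U : Matrix (Fin n) (Fin r) ℝ) (V : Matrix (Fin m) (Fin r) ℝ),
        F (U, V) = (Φ * U, Ψ * V) := by
  -- the scaling matrix 2•1 and its inverse
  set R2 : Matrix (Fin r) (Fin r) ℝ := (2:ℝ) • (1 : Matrix (Fin r) (Fin r) ℝ) with hR2
  have hR2mul : R2 * ((2:ℝ)⁻¹ • (1 : Matrix (Fin r) (Fin r) ℝ)) = 1 := by
    rw [hR2, Matrix.smul_mul, Matrix.mul_smul, Matrix.mul_one, smul_smul]
    norm_num
  have hR2unit : IsUnit R2 := (Matrix.isUnit_iff_isUnit_det _).mpr (Matrix.isUnit_det_of_right_inverse hR2mul)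
  have hR2inv : (R2⁻¹)ᵀ = (2:ℝ)⁻¹ • (1 : Matrix (Fin r) (Fin r) ℝ) := by
    rw [Matrix.inv_eq_right_inv hR2mul, Matrix.transpose_smul, Matrix.transpose_one]
  -- vanishing of cross terms
  have hB : ∀ V : Matrix (Fin m) (Fin r) ℝ, (F (0, V)).1 = 0 := by
    intro V
    have h := hF R2 hR2unit 0 V
    rw [hR2inv, Matrix.zero_mul] at h
    have hl : F (0, V * ((2:ℝ)⁻¹ • (1 : Matrix (Fin r) (Fin r) ℝ))) = (2:ℝ)⁻¹ • F (0, V) := by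
      rw [Matrix.mul_smul, Matrix.mul_one]
      have hp : ((0 : Matrix (Fin n) (Fin r) ℝ), (2:ℝ)⁻¹ • V)
          = (2:ℝ)⁻¹ • ((0 : Matrix (Fin n) (Fin r) ℝ), V) := by
        simp [Prod.smul_mk]
      rw [hp]
      exact LinearMap.map_smul F _ _
    rw [hl] at h
    have h1 : (2:ℝ)⁻¹ • (F (0, V)).1 = (2:ℝ) • (F (0, V)).1 := by
      have h0 := congrArg Prod.fst h
      simp only [Prod.smul_fst] at h0
      rw [h0, hR2, Matrix.mul_smul, Matrix.mul_one]
    have h2 : ((2:ℝ) - (2:ℝ)⁻¹) • (F (0, V)).1 = 0 := by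
      rw [sub_smul, ← h1, sub_self]
    have h3 : ((2:ℝ) - (2:ℝ)⁻¹) ≠ 0 := by norm_num
    rcases smul_eq_zero.mp h2 with h' | h'
    · exact absurd h' h3
    · exact h'
  have hC : ∀ U : Matrix (Fin n) (Fin r) ℝ, (F (U, 0)).2 = 0 := by
    intro U
    have h := hF R2 hR2unit U 0
    rw [hR2inv, Matrix.zero_mul] at h
    have hl : F (U * R2, 0) = (2:ℝ) • F (U, 0) := by
      rw [hR2, Matrix.mul_smul, Matrix.mul_one]
      have hp : ((2:ℝ) • U, (0 : Matrix (Fin m) (Fin r) ℝ))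
          = (2:ℝ) • (U, (0 : Matrix (Fin m) (Fin r) ℝ)) := by
        simp [Prod.smul_mk]
      rw [hp]
      exact LinearMap.map_smul F _ _
    rw [hl] at h
    have h1 : (2:ℝ) • (F (U, 0)).2 = (2:ℝ)⁻¹ • (F (U, 0)).2 := by
      have h0 := congrArg Prod.snd h
      simp only [Prod.smul_snd] at h0
      rw [h0, Matrix.mul_smul, Matrix.mul_one]
    have h2 : ((2:ℝ) - (2:ℝ)⁻¹) • (F (U, 0)).2 = 0 := by
      rw [sub_smul, h1, sub_self]
    have h3 : ((2:ℝ) - (2:ℝ)⁻¹) ≠ 0 := by norm_num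
    rcases smul_eq_zero.mp h2 with h' | h'
    · exact absurd h' h3
    · exact h'
  -- the two diagonal blocks
  set A : Matrix (Fin n) (Fin r) ℝ →ₗ[ℝ] Matrix (Fin n') (Fin r) ℝ :=
    (LinearMap.fst ℝ _ _).comp (F.comp (LinearMap.inl ℝ _ _)) with hA
  set D : Matrix (Fin m) (Fin r) ℝ →ₗ[ℝ] Matrix (Fin m') (Fin r) ℝ :=
    (LinearMap.snd ℝ _ _).comp (F.comp (LinearMap.inr ℝ _ _)) with hD
  have hAval : ∀ U, A U = (F (U, 0)).1 := fun U => rfl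
  have hDval : ∀ V, D V = (F (0, V)).2 := fun V => rfl
  have hAeq : ∀ (U : Matrix (Fin n) (Fin r) ℝ) (R : Matrix (Fin r) (Fin r) ℝ), IsUnit R →
      A (U * R) = A U * R := by
    intro U R hR
    have h := hF R hR U 0
    rw [Matrix.zero_mul] at h
    rw [hAval, hAval]
    exact congrArg Prod.fst h
  have hDeq : ∀ (V : Matrix (Fin m) (Fin r) ℝ) (S : Matrix (Fin r) (Fin r) ℝ), IsUnit S →
      D (V * S) = D V * S := by
    intro V S hS
    have hSd : IsUnit S.det := (Matrix.isUnit_iff_isUnit_det S).mp hS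
    set R : Matrix (Fin r) (Fin r) ℝ := (S⁻¹)ᵀ with hRdef
    have hRd : IsUnit R.det := by
      rw [hRdef, Matrix.det_transpose, Matrix.det_nonsing_inv, Ring.inverse_eq_inv']
      exact hSd.inv
    have hRu : IsUnit R := (Matrix.isUnit_iff_isUnit_det R).mpr hRd
    have hRinvT : (R⁻¹)ᵀ = S := by
      rw [hRdef, ← Matrix.transpose_nonsing_inv, Matrix.transpose_transpose,
        Matrix.nonsing_inv_nonsing_inv _ hSd]
    have h := hF R hRu 0 V
    rw [hRinvT, Matrix.zero_mul] at h
    rw [hDval, hDval]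
    exact congrArg Prod.snd h
  obtain ⟨Φ, hΦ⟩ := rep_lemma A hAeq
  obtain ⟨Ψ, hΨ⟩ := rep_lemma D hDeq
  refine ⟨Φ, Ψ, fun U V => ?_⟩
  have hsplit : F (U, V) = F (U, 0) + F (0, V) := by
    rw [← map_add]
    simp
  rw [hsplit]
  ext1
  · show (F (U, 0)).1 + (F (0, V)).1 = Φ * U
    rw [hB, add_zero, ← hAval, hΦ]
  · show (F (U, 0)).2 + (F (0, V)).2 = Ψ * V
    rw [hC, zero_add, ← hDval, hΨ]
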